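/- Fix t > 0 and nonzero reals {μ(i,j)}_{i<j}. With σ_x := [[1,0],[0,√t·x]], γ := [[0,1],[0,0]], * the transpose, and b_{n,i} := σ_{μ(1,i)} ⊗ … ⊗ σ_{μ(i−1,i)} ⊗ γ ⊗ σ₁^{⊗(n−i)} ∈ M₂(ℝ)^{⊗n}, one has for all 1 ≤ i < j ≤ n: b_{n,i}^* b_{n,j} = (t·μ(i,j))^{−1} · b_{n,j} b_{n,i}^*. -/

import Mathlib

open Filter MeasureTheory ProbabilityTheory
open scoped BigOperators ComplexOrder Classical

noncomputable section

/-- `sel a e` is `a^ε`: `a` if `e = false` (i.e. ε = 1) and `star a` if `e = true` (i.e. ε = ∗). -/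
def sel {A : Type*} [Star A] (a : A) (e : Bool) : A := if e then star a else a

/-- The product `b_{i(1)}^{ε(1)} ⋯ b_{i(r)}^{ε(r)}`, indexed by a list of (index, exponent) pairs. -/
def listProd {A : Type*} [Monoid A] [Star A] (b : ℕ → A) (l : List (ℕ × Bool)) : A :=
  (l.map fun p => sel (b p.1) p.2).prod

/-- The product `b_{i(1)}^{ε(1)} ⋯ b_{i(r)}^{ε(r)}`, indexed by `Fin r`. -/
def tupProd {A : Type*} [Monoid A] [Star A] (b : ℕ → A) {r : ℕ}
    (i : Fin r → ℕ) (eps : Fin r → Bool) : A :=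
  (List.ofFn fun k => sel (b (i k)) (eps k)).prod

/-- The mixed moment `φ(X^{ε(1)} ⋯ X^{ε(r)})` of a single element `X`. -/
def smom {A : Type*} [Ring A] [StarRing A] [Algebra ℂ A] (φ : A →ₗ[ℂ] ℂ)
    (X : A) {r : ℕ} (eps : Fin r → Bool) : ℂ :=
  φ ((List.ofFn fun k => sel X (eps k)).prod)

/-- The commutation coefficients are nonzero reals. -/
def NonzeroCoeff (c : Bool → Bool → ℕ → ℕ → ℝ) : Prop :=
  ∀ i j : ℕ, i ≠ j → ∀ e e' : Bool, c e e' i j ≠ 0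

/-- Relations (A)–(B) on the commutation coefficients (`false` = 1, `true` = ∗):
`μ_{ε,ε'}(i,j) = 1/μ_{ε',ε}(j,i)`, `μ_{1,1}(i,j) = 1/μ_{∗,∗}(i,j)`,
`μ_{1,∗}(i,j) = 1/μ_{∗,1}(i,j)`. -/
def RelAB (c : Bool → Bool → ℕ → ℕ → ℝ) : Prop :=
  (∀ i j : ℕ, i ≠ j → ∀ e e' : Bool, c e e' i j = (c e' e j i)⁻¹) ∧
  (∀ i j : ℕ, i ≠ j → c false false i j = (c true true i j)⁻¹) ∧
  (∀ i j : ℕ, i ≠ j → c false true i j = (c true false i j)⁻¹)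

/-- Condition (★) for a sequence `b` in a complex ∗-probability space, with
commutation coefficients `c e e' i j = μ_{ε,ε'}(i,j)` (`false` = 1, `true` = ∗).
The factoring over naturally ordered products is stated in block form: a naturally
ordered product is a concatenation of nonempty blocks with constant indices, the
(distinct) block indices being strictly increasing. -/
structure StarCond {A : Type*} [Ring A] [StarRing A] [Algebra ℂ A]
    (φ : A →ₗ[ℂ] ℂ) (b : ℕ → A) (c : Bool → Bool → ℕ → ℕ → ℝ) : Prop where
  zero_mean : ∀ i, φ (b i) = 0
  zero_mean_star : ∀ i, φ (star (b i)) = 0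
  zero_bb : ∀ i, φ (b i * b i) = 0
  zero_ss : ∀ i, φ (star (b i) * star (b i)) = 0
  zero_sb : ∀ i, φ (star (b i) * b i) = 0
  covar : ∀ i j : ℕ, ∀ e e' : Bool,
    φ (sel (b i) e * sel (b i) e') = φ (sel (b j) e * sel (b j) e')
  bounded : ∀ r : ℕ, ∃ α : ℝ, 0 ≤ α ∧ ∀ l : List (ℕ × Bool), l.length = r →
    ‖φ (listProd b l)‖ ≤ α
  factors : ∀ L : List (ℕ × List Bool),
    List.Chain' (· < ·) (L.map Prod.fst) → (∀ p ∈ L, p.2 ≠ []) →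
    φ ((L.map fun p => (p.2.map (sel (b p.1))).prod).prod)
      = (L.map fun p => φ ((p.2.map (sel (b p.1))).prod)).prod
  commRel : ∀ i j : ℕ, i ≠ j → ∀ e e' : Bool,
    sel (b i) e * sel (b j) e' = ((c e' e j i : ℝ) : ℂ) • (sel (b j) e' * sel (b i) e)

/-- The normalized partial sum `S_N = (b 1 + ⋯ + b N)/√N`. -/
def pSum {A : Type*} [Ring A] [Algebra ℂ A] (b : ℕ → A) (N : ℕ) : A :=
  (((Real.sqrt N)⁻¹ : ℝ) : ℂ) • ∑ i ∈ Finset.Icc 1 N, b i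

/-- A pair partition `V = {(w 1, z 1), …, (w n, z n)}` of `{1, …, 2n}` (here of `Fin (2n)`),
with `w i < z i`, `w` strictly increasing, and the `w i, z i` exhausting `Fin (2n)`. -/
structure PairPartition (n : ℕ) where
  w : Fin n → Fin (2 * n)
  z : Fin n → Fin (2 * n)
  wz : ∀ i, w i < z i
  mono : StrictMono w
  bij : Function.Bijective fun p : Fin n × Bool => if p.2 then z p.1 else w p.1

instance (n : ℕ) : Fintype (PairPartition n) :=
  Fintype.ofInjective (fun V : PairPartition n => (V.w, V.z)) (by
    rintro ⟨w₁, z₁, h₁, h₂, h₃⟩ ⟨w₂, z₂, g₁, g₂, g₃⟩ h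
    simp only [Prod.mk.injEq] at h
    obtain ⟨rfl, rfl⟩ := h
    rfl)

/-- The crossings of a pair partition: pairs of blocks `(j, k)` with `w j < w k < z j < z k`. -/
def crossSet {n : ℕ} (V : PairPartition n) : Finset (Fin n × Fin n) :=
  Finset.univ.filter fun p => V.w p.1 < V.w p.2 ∧ V.w p.2 < V.z p.1 ∧ V.z p.1 < V.z p.2

/-- The nestings of a pair partition: pairs of blocks `(j, m)` with `w j < w m < z m < z j`. -/
def nestSet {n : ℕ} (V : PairPartition n) : Finset (Fin n × Fin n) :=
  Finset.univ.filter fun p => V.w p.1 < V.w p.2 ∧ V.w p.2 < V.z p.2 ∧ V.z p.2 < V.z p.1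

/-- `cross(V)`, the number of crossings. -/
def crossNum {n : ℕ} (V : PairPartition n) : ℕ := (crossSet V).card

/-- `nest(V)`, the number of nestings. -/
def nestNum {n : ℕ} (V : PairPartition n) : ℕ := (nestSet V).card

/-- Two positions lie in the same block of the pair partition `V`. -/
def sameBlock {n : ℕ} (V : PairPartition n) (k₁ k₂ : Fin (2 * n)) : Prop :=
  k₁ = k₂ ∨ ∃ m, (k₁ = V.w m ∧ k₂ = V.z m) ∨ (k₁ = V.z m ∧ k₂ = V.w m)

/-- `(i(1), …, i(2n)) ∼ V`: entries agree exactly on the blocks of `V`. -/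
def tupleEquiv {n : ℕ} {α : Type*} (V : PairPartition n) (i : Fin (2 * n) → α) : Prop :=
  ∀ k₁ k₂, i k₁ = i k₂ ↔ sameBlock V k₁ k₂

/-- The tuples in `[N]^{2n} = {1, …, N}^{2n}` that are equivalent to `V`. -/
def tuples (n N : ℕ) (V : PairPartition n) : Finset (Fin (2 * n) → ℕ) :=
  (Fintype.piFinset fun _ : Fin (2 * n) => Finset.Icc 1 N).filter fun i => tupleEquiv V i

/-- `β^{ε(1),…,ε(2n)}_{i(1),…,i(2n)}`: the product over crossings of `V` of
`μ_{ε(z_j),ε(w_k)}(i(z_j),i(w_k))` times the product over nestings of `V` of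
`μ_{ε(z_j),ε(z_m)}(i(z_j),i(z_m)) · μ_{ε(z_j),ε(w_m)}(i(z_j),i(w_m))`. -/
def betaProd (n : ℕ) (V : PairPartition n) (eps : Fin (2 * n) → Bool)
    (c : Bool → Bool → ℕ → ℕ → ℝ) (i : Fin (2 * n) → ℕ) : ℝ :=
  (∏ p ∈ crossSet V, c (eps (V.z p.1)) (eps (V.w p.2)) (i (V.z p.1)) (i (V.w p.2))) *
  ∏ p ∈ nestSet V,
    c (eps (V.z p.1)) (eps (V.z p.2)) (i (V.z p.1)) (i (V.z p.2)) *
      c (eps (V.z p.1)) (eps (V.w p.2)) (i (V.z p.1)) (i (V.w p.2))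

/-- `X_N = N^{-n} Σ_{(i(1),…,i(2n)) ∼ V} β^{ε(1),…,ε(2n)}_{i(1),…,i(2n)}`, whose limit
(when it exists) is `λ_{V,ε(1),…,ε(2n)}`. -/
def lambdaSum (n : ℕ) (V : PairPartition n) (eps : Fin (2 * n) → Bool)
    (c : Bool → Bool → ℕ → ℕ → ℝ) (N : ℕ) : ℝ :=
  ((N : ℝ)⁻¹) ^ n * ∑ i ∈ tuples n N V, betaProd n V eps c i

/-- One-pair standard prescription: for `x = μ(i,j)` (with `i < j`),
`μ_{∗,∗} = x`, `μ_{∗,1} = t·x`, `μ_{1,1} = x⁻¹`, `μ_{1,∗} = (t·x)⁻¹`. -/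
def prescOne (t x : ℝ) (e e' : Bool) : ℝ :=
  if e then (if e' then x else t * x) else (if e' then (t * x)⁻¹ else x⁻¹)

/-- The standard prescription of commutation coefficients from `{μ(i,j)}_{i<j}`,
extended to `i > j` by `μ_{ε',ε}(j,i) = 1/μ_{ε,ε'}(i,j)`. -/
def presc (t : ℝ) (m : ℕ → ℕ → ℝ) (e e' : Bool) (i j : ℕ) : ℝ :=
  if i < j then prescOne t (m i j) e e' else (prescOne t (m j i) e' e)⁻¹

/-- The index set `{(i,j) : 1 ≤ i < j}` of the random commutation coefficients. -/
def PairIdx : Type := {p : ℕ × ℕ // 1 ≤ p.1 ∧ p.1 < p.2}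

/-- `σ_x = [[1,0],[0,√t·x]]`. -/
def sigmaM (t x : ℝ) : Matrix (Fin 2) (Fin 2) ℝ := !![1, 0; 0, Real.sqrt t * x]

/-- `γ = [[0,1],[0,0]]`. -/
def gammaM : Matrix (Fin 2) (Fin 2) ℝ := !![0, 1; 0, 0]

/-- The two-parameter Jordan–Wigner matrix
`b_{n,i} = σ_{μ(1,i)} ⊗ ⋯ ⊗ σ_{μ(i-1,i)} ⊗ γ ⊗ σ₁^{⊗(n-i)} ∈ M₂(ℝ)^{⊗n}`,
realized on the index set `Fin n → Fin 2` (tensor/Kronecker products of matrices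
have entries the products of the entries of the factors). -/
def jw (t : ℝ) (m : ℕ → ℕ → ℝ) (n i : ℕ) : Matrix (Fin n → Fin 2) (Fin n → Fin 2) ℝ :=
  Matrix.of fun x y => ∏ k : Fin n,
    (if (k : ℕ) + 1 < i then sigmaM t (m ((k : ℕ) + 1) i)
     else if (k : ℕ) + 1 = i then gammaM
     else sigmaM t 1) (x k) (y k)

/-- `φ_n(a) = ⟨a e₀, e₀⟩ = a₀₀`. -/
def phiM (n : ℕ) (a : Matrix (Fin n → Fin 2) (Fin n → Fin 2) ℝ) : ℝ :=
  a (fun _ => 0) (fun _ => 0)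

/-- The normalized partial sum `S_N = (b_{N,1} + ⋯ + b_{N,N})/√N` of Jordan–Wigner matrices. -/
def jwS (t : ℝ) (m : ℕ → ℕ → ℝ) (N : ℕ) : Matrix (Fin N → Fin 2) (Fin N → Fin 2) ℝ :=
  (Real.sqrt N)⁻¹ • ∑ i ∈ Finset.Icc 1 N, jw t m N i

open Matrix
lemma kron_mul_apply {n : ℕ} (A B : Fin n → Matrix (Fin 2) (Fin 2) ℝ)
    (x y : Fin n → Fin 2) :
    ((Matrix.of fun x y => ∏ k, A k (x k) (y k)) *
      (Matrix.of fun x y => ∏ k, B k (x k) (y k)) :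
        Matrix (Fin n → Fin 2) (Fin n → Fin 2) ℝ) x y
      = ∏ k, (A k * B k) (x k) (y k) := by
  simp only [Matrix.mul_apply, Matrix.of_apply, ← Finset.prod_mul_distrib]
  rw [Finset.prod_univ_sum, Fintype.piFinset_univ]

/-- factor of jw -/
def jwF (t : ℝ) (m : ℕ → ℕ → ℝ) (i a : ℕ) : Matrix (Fin 2) (Fin 2) ℝ :=
  if a < i then sigmaM t (m a i) else if a = i then gammaM else sigmaM t 1

lemma sigma_transpose (t u : ℝ) : (sigmaM t u)ᵀ = sigmaM t u := by
  ext a b; fin_cases a <;> fin_cases b <;> simp [sigmaM]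

lemma sigma_comm (t u v : ℝ) : sigmaM t u * sigmaM t v = sigmaM t v * sigmaM t u := by
  ext a b; fin_cases a <;> fin_cases b <;>
    simp [sigmaM, Matrix.mul_apply, Fin.sum_univ_two] <;> ring

lemma gamma_transpose : gammaMᵀ = !![0, 0; 1, 0] := by
  ext a b; fin_cases a <;> fin_cases b <;> rfl

lemma gammaT_sigma (t u : ℝ) (h : Real.sqrt t * u ≠ 0) :
    gammaMᵀ * sigmaM t u = (Real.sqrt t * u)⁻¹ • (sigmaM t u * gammaMᵀ) := by
  obtain ⟨h1, h2⟩ : Real.sqrt t ≠ 0 ∧ u ≠ 0 := mul_ne_zero_iff.mp h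
  rw [gamma_transpose]
  ext a b; fin_cases a <;> fin_cases b <;>
    simp [sigmaM, Matrix.mul_apply, Fin.sum_univ_two, inv_mul_cancel₀ h] <;>
    field_simp <;> ring

lemma sigmaT_gamma (t : ℝ) (h : Real.sqrt t ≠ 0) :
    (sigmaM t 1)ᵀ * gammaM = (Real.sqrt t)⁻¹ • (gammaM * (sigmaM t 1)ᵀ) := by
  rw [sigma_transpose]
  ext a b; fin_cases a <;> fin_cases b <;>
    simp [sigmaM, gammaM, Matrix.mul_apply, Fin.sum_univ_two, inv_mul_cancel₀ h]

/-- for `1 ≤ i < j ≤ n`, the Jordan–Wigner matrices satisfy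
`b_{n,i}^∗ b_{n,j} = (t·μ(i,j))⁻¹ · b_{n,j} b_{n,i}^∗`. -/
theorem jordan_wigner_star_comm (t : ℝ) (ht : 0 < t) (m : ℕ → ℕ → ℝ)
    (hm : ∀ i j : ℕ, i < j → m i j ≠ 0)
    (n i j : ℕ) (hi : 1 ≤ i) (hij : i < j) (hj : j ≤ n) :
    star (jw t m n i) * jw t m n j = (t * m i j)⁻¹ • (jw t m n j * star (jw t m n i)) := by
  have hx : m i j ≠ 0 := hm i j hij
  have hst : (0:ℝ) < Real.sqrt t := Real.sqrt_pos.mpr ht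
  have hst' : Real.sqrt t ≠ 0 := ne_of_gt hst
  have hij' : i ≠ j := ne_of_lt hij
  -- factors and scalars
  have key : ∀ a : ℕ, (jwF t m i a)ᵀ * jwF t m j a =
      (if a = i then (Real.sqrt t * m i j)⁻¹ else if a = j then (Real.sqrt t)⁻¹ else 1) •
        (jwF t m j a * (jwF t m i a)ᵀ) := by
    intro a
    rcases lt_trichotomy a i with h | h | h
    · have h2 : a < j := h.trans hij
      simp only [jwF, if_pos h, if_pos h2, if_neg (ne_of_lt h), if_neg (ne_of_lt h2),
        sigma_transpose, one_smul]
      exact sigma_comm t (m a i) (m a j)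
    · subst h
      simp only [jwF, lt_irrefl, if_neg (lt_irrefl a), if_pos rfl, if_pos hij, if_neg hij']
      exact gammaT_sigma t (m a j) (mul_ne_zero hst' hx)
    · have h1 : ¬ a < i := not_lt.mpr h.le
      have h2 : a ≠ i := (ne_of_gt h)
      rcases lt_trichotomy a j with g | g | g
      · simp only [jwF, if_neg h1, if_neg h2, if_pos g, if_neg (ne_of_lt g),
          sigma_transpose, one_smul]
        exact sigma_comm t 1 (m a j)
      · subst g
        simp only [jwF, if_neg h1, if_neg h2, if_neg (lt_irrefl a), if_pos rfl,
          if_pos rfl]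
        exact sigmaT_gamma t hst'
      · have g1 : ¬ a < j := not_lt.mpr g.le
        have g2 : a ≠ j := ne_of_gt g
        simp only [jwF, if_neg h1, if_neg h2, if_neg g1, if_neg g2, sigma_transpose,
          one_smul]
  -- product of scalars
  have hprod : (∏ k : Fin n,
      (if (k:ℕ)+1 = i then (Real.sqrt t * m i j)⁻¹ else
        if (k:ℕ)+1 = j then (Real.sqrt t)⁻¹ else 1)) = (t * m i j)⁻¹ := by
    have split : ∀ k : Fin n,
        (if (k:ℕ)+1 = i then (Real.sqrt t * m i j)⁻¹ else
          if (k:ℕ)+1 = j then (Real.sqrt t)⁻¹ else 1)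
        = (if (k:ℕ)+1 = i then (Real.sqrt t * m i j)⁻¹ else 1) *
          (if (k:ℕ)+1 = j then (Real.sqrt t)⁻¹ else 1) := by
      intro k
      by_cases h1 : (k:ℕ)+1 = i
      · have : (k:ℕ)+1 ≠ j := by omega
        simp [h1, this, hij']
      · by_cases h2 : (k:ℕ)+1 = j <;> simp [h1, h2, hij'.symm]
    rw [Finset.prod_congr rfl fun k _ => split k, Finset.prod_mul_distrib]
    have hin : i - 1 < n := by omega
    have hjn : j - 1 < n := by omega
    have e1 : (∏ k : Fin n, (if (k:ℕ)+1 = i then (Real.sqrt t * m i j)⁻¹ else 1))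
        = (Real.sqrt t * m i j)⁻¹ := by
      rw [Finset.prod_eq_single (⟨i-1, hin⟩ : Fin n)]
      · simp [show (i-1)+1 = i by omega]
      · intro k _ hk
        have : (k:ℕ)+1 ≠ i := by
          intro hc; apply hk; apply Fin.ext; simp; omega
        simp [this]
      · simp
    have e2 : (∏ k : Fin n, (if (k:ℕ)+1 = j then (Real.sqrt t)⁻¹ else 1))
        = (Real.sqrt t)⁻¹ := by
      rw [Finset.prod_eq_single (⟨j-1, hjn⟩ : Fin n)]
      · simp [show (j-1)+1 = j by omega]
      · intro k _ hk
        have : (k:ℕ)+1 ≠ j := by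
          intro hc; apply hk; apply Fin.ext; simp; omega
        simp [this]
      · simp
    rw [e1, e2, ← mul_inv]
    congr 1
    rw [mul_comm, ← mul_assoc, Real.mul_self_sqrt ht.le]
  -- rewrite star of jw
  have hs : star (jw t m n i)
      = Matrix.of fun x y => ∏ k : Fin n, (jwF t m i ((k:ℕ)+1))ᵀ (x k) (y k) := by
    ext x y
    simp only [Matrix.star_apply, Matrix.of_apply, Matrix.transpose_apply, jw, jwF,
      star_trivial]
  have hjj : jw t m n j
      = Matrix.of fun x y => ∏ k : Fin n, jwF t m j ((k:ℕ)+1) (x k) (y k) := rfl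
  rw [hs, hjj]
  ext x y
  rw [Matrix.smul_apply, kron_mul_apply, kron_mul_apply, smul_eq_mul, ← hprod,
    ← Finset.prod_mul_distrib]
  refine Finset.prod_congr rfl fun k _ => ?_
  rw [key ((k:ℕ)+1), Matrix.smul_apply, smul_eq_mul]
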